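/- For all integers $n \geq 0$ and $i \geq 1$, $\frac{1}{\sqrt{\pi}}\sqrt{\frac{2n}{i+2}+1} \leq \prod_{t=1}^{n} \frac{i+2t}{i+2t-1} \leq \sqrt{\pi}\sqrt{\frac{2n}{i+2}+1}$. -/

import Mathlib

open Real

lemma prod_sq_bounds (i : ℕ) (hi : 1 ≤ i) (n : ℕ) :
    ((i:ℝ) + 2*(n:ℝ) + 1)/((i:ℝ)+1) ≤
      (∏ t ∈ Finset.Icc 1 n, (((i:ℝ) + 2*(t:ℝ)) / ((i:ℝ) + 2*(t:ℝ) - 1)))^2 ∧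
    (∏ t ∈ Finset.Icc 1 n, (((i:ℝ) + 2*(t:ℝ)) / ((i:ℝ) + 2*(t:ℝ) - 1)))^2 ≤
      ((i:ℝ) + 2*(n:ℝ))/(i:ℝ) := by
  have hi1 : (1:ℝ) ≤ (i:ℝ) := by exact_mod_cast hi
  induction n with
  | zero =>
    have h1 : ((i:ℝ)+1) ≠ 0 := by linarith
    have h2 : (i:ℝ) ≠ 0 := by linarith
    norm_num [div_self h1, div_self h2]
  | succ m ih =>
    set P : ℝ := ∏ t ∈ Finset.Icc 1 m, (((i:ℝ) + 2*(t:ℝ)) / ((i:ℝ) + 2*(t:ℝ) - 1)) with hPdef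
    have hprod : (∏ t ∈ Finset.Icc 1 (m+1), (((i:ℝ) + 2*(t:ℝ)) / ((i:ℝ) + 2*(t:ℝ) - 1)))
        = P * (((i:ℝ) + 2*((m:ℝ)+1)) / ((i:ℝ) + 2*((m:ℝ)+1) - 1)) := by
      rw [Finset.prod_Icc_succ_top (Nat.one_le_iff_ne_zero.mpr (Nat.succ_ne_zero m))]
      rw [← hPdef]
      push_cast
      ring_nf
    set c : ℝ := (i:ℝ) + 2*(m:ℝ) with hc
    have hm : (0:ℝ) ≤ (m:ℝ) := Nat.cast_nonneg m
    have hc0 : 0 < c := by simp [hc]; linarith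
    have hc1 : 0 < c + 1 := by linarith
    have hr : ((i:ℝ) + 2*((m:ℝ)+1)) / ((i:ℝ) + 2*((m:ℝ)+1) - 1) = (c+2)/(c+1) := by
      rw [hc]; ring_nf
    rw [hprod, hr, mul_pow]
    push_cast
    obtain ⟨ihl, ihu⟩ := ih
    constructor
    · have h1 : (c+3)/(c+1) ≤ ((c+2)/(c+1))^2 := by
        rw [div_pow, div_le_div_iff₀ hc1 (by positivity)]
        nlinarith
      have h2 : (c+1)/((i:ℝ)+1) ≤ P^2 := by
        have hcc : c + 1 = (i:ℝ) + 2*(m:ℝ) + 1 := by rw [hc]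
        rw [hcc]; exact ihl
      calc ((i:ℝ) + 2*((m:ℝ)+1) + 1)/((i:ℝ)+1) = (c+1)/((i:ℝ)+1) * ((c+3)/(c+1)) := by
            rw [hc]; field_simp; ring
        _ ≤ P^2 * ((c+2)/(c+1))^2 := by
            apply mul_le_mul h2 h1 (by positivity) (sq_nonneg P)
    · have h1 : ((c+2)/(c+1))^2 ≤ (c+2)/c := by
        rw [div_pow, div_le_div_iff₀ (by positivity) hc0]
        nlinarith
      have h2 : P^2 ≤ c/(i:ℝ) := by
        rw [hc]; exact ihu
      calc P^2 * ((c+2)/(c+1))^2 ≤ (c/(i:ℝ)) * ((c+2)/c) := by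
            apply mul_le_mul h2 h1 (by positivity) (by positivity)
        _ = ((i:ℝ) + 2*((m:ℝ)+1))/(i:ℝ) := by
            rw [hc]; field_simp; ring

theorem product_ratio_bounds (n i : ℕ) (hi : 1 ≤ i) :
    (1 / Real.sqrt π) * Real.sqrt (2*(n:ℝ) / ((i:ℝ) + 2) + 1) ≤
        (∏ t ∈ Finset.Icc 1 n, (((i:ℝ) + 2*(t:ℝ)) / ((i:ℝ) + 2*(t:ℝ) - 1))) ∧
      (∏ t ∈ Finset.Icc 1 n, (((i:ℝ) + 2*(t:ℝ)) / ((i:ℝ) + 2*(t:ℝ) - 1))) ≤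
        Real.sqrt π * Real.sqrt (2*(n:ℝ) / ((i:ℝ) + 2) + 1) := by
  have hi1 : (1:ℝ) ≤ (i:ℝ) := by exact_mod_cast hi
  have hn : (0:ℝ) ≤ (n:ℝ) := Nat.cast_nonneg n
  obtain ⟨hl, hu⟩ := prod_sq_bounds i hi n
  set P : ℝ := ∏ t ∈ Finset.Icc 1 n, (((i:ℝ) + 2*(t:ℝ)) / ((i:ℝ) + 2*(t:ℝ) - 1)) with hPdef
  have hP0 : 0 < P := by
    apply Finset.prod_pos
    intro t ht
    have ht1 : (1:ℝ) ≤ (t:ℝ) := by exact_mod_cast (Finset.mem_Icc.mp ht).1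
    have : 0 < (i:ℝ) + 2*(t:ℝ) - 1 := by linarith
    positivity
  have hpi3 : (3:ℝ) ≤ π := by linarith [Real.pi_gt_three]
  have hpi0 : (0:ℝ) < π := Real.pi_pos
  have hX0 : (0:ℝ) ≤ 2*(n:ℝ) / ((i:ℝ) + 2) + 1 := by positivity
  constructor
  · -- lower bound
    have key : (2*(n:ℝ) / ((i:ℝ) + 2) + 1) / π ≤ P^2 := by
      refine le_trans ?_ hl
      have hXeq : 2*(n:ℝ)/((i:ℝ)+2)+1 = (2*(n:ℝ)+((i:ℝ)+2))/((i:ℝ)+2) := by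
        field_simp
      rw [hXeq, div_div, div_le_div_iff₀ (by positivity) (by linarith)]
      have hpi1 : (1:ℝ) ≤ π := by linarith
      have hx : (0:ℝ) ≤ ((i:ℝ)+2*(n:ℝ)+1)*((i:ℝ)+2) := by positivity
      nlinarith [mul_le_mul_of_nonneg_right hpi1 hx]
    have : (2*(n:ℝ) / ((i:ℝ) + 2) + 1) / π ≤ P^2 → Real.sqrt ((2*(n:ℝ) / ((i:ℝ) + 2) + 1) / π) ≤ P := by
      intro h
      calc Real.sqrt ((2*(n:ℝ) / ((i:ℝ) + 2) + 1) / π) ≤ Real.sqrt (P^2) :=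
            Real.sqrt_le_sqrt h
        _ = P := Real.sqrt_sq hP0.le
    have h2 := this key
    rwa [Real.sqrt_div hX0 π, div_eq_mul_one_div, mul_comm] at h2
  · -- upper bound
    have key : P^2 ≤ π * (2*(n:ℝ) / ((i:ℝ) + 2) + 1) := by
      refine le_trans hu ?_
      have hXeq : 2*(n:ℝ)/((i:ℝ)+2)+1 = (2*(n:ℝ)+((i:ℝ)+2))/((i:ℝ)+2) := by
        field_simp
      rw [hXeq, mul_div_assoc', div_le_div_iff₀ (by linarith) (by linarith)]
      nlinarith [mul_nonneg (by positivity : (0:ℝ) ≤ (2*(n:ℝ)+((i:ℝ)+2))*(i:ℝ))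
          (by linarith : (0:ℝ) ≤ π - 3),
        mul_nonneg hn (by linarith : (0:ℝ) ≤ (i:ℝ) - 1)]
    calc P = Real.sqrt (P^2) := (Real.sqrt_sq hP0.le).symm
      _ ≤ Real.sqrt (π * (2*(n:ℝ) / ((i:ℝ) + 2) + 1)) := Real.sqrt_le_sqrt key
      _ = Real.sqrt π * Real.sqrt (2*(n:ℝ) / ((i:ℝ) + 2) + 1) := Real.sqrt_mul hpi0.le _
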